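/- In the limit p → -1 (equivalently b → 1), the coefficients of the generating function Σ_l h_p(l) x^{2l} = (1/(1+p))[p + cosh(2(b-1) arctanh x)] converge for each l ≥ 1 to h_{-1}(l) = (4/(π² l)) Σ_{k=1}^{l} 1/(2k-1). -/

import Mathlib

open Real Finset Filter

/-- Rising factorial (Pochhammer symbol) `(a)_k = a(a+1)⋯(a+k-1)` over the reals. -/
noncomputable def poch (a : ℝ) (k : ℕ) : ℝ := ∏ j ∈ Finset.range k, (a + j)

/-- The terminating Gauss hypergeometric sum `₂F₁(-2l, b-1; b-2l; -1)`. -/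
noncomputable def hyp2F1term (b : ℝ) (l : ℕ) : ℝ :=
  ∑ k ∈ Finset.range (2 * l + 1),
    poch (-(2 * (l : ℝ))) k * poch (b - 1) k / (poch (b - 2 * l) k * (Nat.factorial k)) *
      (-1 : ℝ) ^ k

/-- `Pp m b = ∏_{i=1}^m (b-i)`. -/
noncomputable def Pp (m : ℕ) (b : ℝ) : ℝ := ∏ i ∈ Finset.range m, (b - 1 - i)

lemma gamma_shift (x : ℝ) (n : ℕ) (h : ∀ j : ℕ, j < n → x + j ≠ 0) :
    Real.Gamma (x + n) = poch x n * Real.Gamma x := by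
  induction n with
  | zero => simp [poch]
  | succ n ih =>
    have h1 : x + (n+1 : ℕ) = (x + n) + 1 := by push_cast; ring
    rw [h1, Real.Gamma_add_one (h n (by omega)), poch, Finset.prod_range_succ,
      ← poch, ih (fun j hj => h j (by omega))]
    ring

lemma poch_neg_nat (n k : ℕ) (hk : k ≤ n) :
    poch (-(n:ℝ)) k * (-1)^k = (n.choose k : ℝ) * (Nat.factorial k) := by
  have : poch (-(n:ℝ)) k = (-1)^k * (n.descFactorial k : ℝ) := by
    rw [Nat.descFactorial_eq_prod_range, poch, Nat.cast_prod]
    have hc : ∀ j ∈ Finset.range k, (-(n:ℝ) + j) = -1 * ((n - j : ℕ) : ℝ) := by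
      intro j hj
      simp only [Finset.mem_range] at hj
      have : j ≤ n := by omega
      push_cast [this]; ring
    rw [Finset.prod_congr rfl hc, Finset.prod_mul_distrib, Finset.prod_const, Finset.card_range]
  rw [this, Nat.descFactorial_eq_factorial_mul_choose]
  push_cast
  ring_nf
  rw [pow_mul', neg_one_sq, one_pow, mul_one]

lemma poch_tail (n k : ℕ) (hk : k ≤ n) (b : ℝ) :
    poch (b - n) n = poch (b - n) k * Pp (n - k) b := by
  rw [poch, poch, Pp, ← Finset.prod_range_mul_prod_Ico _ hk]
  congr 1
  refine Finset.prod_nbij' (fun j => n - 1 - j) (fun i => n - 1 - i) ?_ ?_ ?_ ?_ ?_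
  · intro j hj; simp only [Finset.mem_Ico] at hj; simp only [Finset.mem_range]; omega
  · intro i hi; simp only [Finset.mem_range] at hi; simp only [Finset.mem_Ico]; omega
  · intro j hj; simp only [Finset.mem_Ico] at hj; show n - 1 - (n - 1 - j) = j; omega
  · intro i hi; simp only [Finset.mem_range] at hi; show n - 1 - (n - 1 - i) = i; omega
  · intro j hj
    simp only [Finset.mem_Ico] at hj
    have h1 : ((n - 1 - j : ℕ) : ℝ) = (n:ℝ) - 1 - j := by
      have h2 : 1 + j ≤ n := by omega
      push_cast [Nat.sub_sub, h2]; ring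
    rw [h1]; ring

lemma Pp_factor (m : ℕ) (hm : 1 ≤ m) (b : ℝ) :
    Pp m b = (b - 1) * ∏ i ∈ Finset.range (m - 1), (b - 2 - i) := by
  obtain ⟨m, rfl⟩ : ∃ m', m = m' + 1 := ⟨m - 1, by omega⟩
  rw [Pp, Finset.prod_range_succ']
  simp only [Nat.add_sub_cancel, Nat.cast_zero, sub_zero]
  rw [mul_comm]
  congr 1
  refine Finset.prod_congr rfl fun i _ => ?_
  push_cast; ring

lemma poch_factor (k : ℕ) (hk : 1 ≤ k) (b : ℝ) :
    poch (b - 1) k = (b - 1) * poch b (k - 1) := by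
  obtain ⟨k, rfl⟩ : ∃ k', k = k' + 1 := ⟨k - 1, by omega⟩
  rw [poch, Finset.prod_range_succ']
  simp only [Nat.add_sub_cancel, Nat.cast_zero, add_zero]
  rw [mul_comm, poch]
  congr 1
  refine Finset.prod_congr rfl fun i _ => ?_
  push_cast; ring

lemma poch_one (m : ℕ) : poch 1 m = (Nat.factorial m : ℝ) := by
  rw [poch, ← Finset.prod_range_add_one_eq_factorial m, Nat.cast_prod]
  refine Finset.prod_congr rfl fun i _ => ?_
  push_cast; ring

noncomputable def Rr (n : ℕ) (b : ℝ) : ℝ := ∏ i ∈ Finset.range (n-1), (b - 2 - i)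
noncomputable def Ss (n : ℕ) (b : ℝ) : ℝ := poch b (n-1)
noncomputable def Mm (n : ℕ) (b : ℝ) : ℝ :=
  ∑ k ∈ Finset.Ico 1 n, (n.choose k : ℝ) * poch b (k-1) * ∏ i ∈ Finset.range (n-k-1), (b - 2 - i)

lemma poch_shift_ne_zero (n k : ℕ) (hk : k ≤ n) (b : ℝ) (hb : b < 1) :
    poch (b - n) k ≠ 0 := by
  rw [poch]
  refine Finset.prod_ne_zero_iff.mpr fun j hj => ?_
  simp only [Finset.mem_range] at hj
  have : (j:ℝ) + 1 ≤ (n:ℝ) := by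
    have h1 : j + 1 ≤ n := by omega
    exact_mod_cast Nat.cast_le.mpr h1
  nlinarith

lemma gamma_ratio (l : ℕ) (b : ℝ) (hb0 : 0 < b) (hb1 : b < 1) :
    Real.Gamma b / (Real.Gamma (2*(l:ℝ)+1) * Real.Gamma (b - 2*l)) =
      poch (b - 2*l) (2*l) / (Nat.factorial (2*l)) := by
  have hcast : (2*(l:ℝ)+1) = ((2*l : ℕ):ℝ) + 1 := by push_cast; ring
  have hfact : Real.Gamma (2*(l:ℝ)+1) = (Nat.factorial (2*l) : ℝ) := by
    rw [hcast, Real.Gamma_nat_eq_factorial]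
  have hsh : Real.Gamma b = poch (b - 2*l) (2*l) * Real.Gamma (b - 2*l) := by
    have := gamma_shift (b - 2*l) (2*l) (fun j hj => by
      have : (j:ℝ) ≤ (2*l:ℝ) - 1 := by
        have : j + 1 ≤ 2*l := by omega
        calc (j:ℝ) ≤ ((2*l - 1 : ℕ):ℝ) := by exact_mod_cast Nat.le_sub_one_of_lt hj
        _ = (2*l:ℝ) - 1 := by
            have h2 : 1 ≤ 2*l := by omega
            push_cast [h2]; ring
      intro h; push_cast at h; nlinarith)
    rw [← this]; norm_num
  have hne : Real.Gamma (b - 2*l) ≠ 0 := by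
    refine Real.Gamma_ne_zero fun m => ?_
    intro h
    have h1 : (m:ℝ) < 2*l := by push_cast at h; nlinarith
    have h2 : (2*(l:ℝ)) < m + 1 := by push_cast at h ⊢; nlinarith
    have h1' : m < 2*l := by exact_mod_cast h1
    have h2' : 2*l < m + 1 := by exact_mod_cast (by push_cast; linarith : ((2*l:ℕ):ℝ) < ((m+1:ℕ):ℝ))
    omega
  rw [hsh, hfact]
  field_simp

lemma hyp_mul (l : ℕ) (b : ℝ) (hb1 : b < 1) :
    hyp2F1term b l * poch (b - 2*l) (2*l) =
      ∑ k ∈ Finset.range (2*l+1), ((2*l).choose k : ℝ) * poch (b-1) k * Pp (2*l - k) b := by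
  rw [hyp2F1term, Finset.sum_mul]
  refine Finset.sum_congr rfl fun k hk => ?_
  simp only [Finset.mem_range] at hk
  have hk' : k ≤ 2*l := by omega
  have hne := poch_shift_ne_zero (2*l) k hk' b hb1
  have hfe : (Nat.factorial k : ℝ) ≠ 0 := by exact_mod_cast (Nat.factorial_pos k).ne'
  have hsplit := poch_tail (2*l) k hk' b
  have hchoose := poch_neg_nat (2*l) k hk'
  push_cast at hne hsplit hchoose
  have hneg : -(2*(l:ℝ)) = -((2:ℝ)*l) := by ring
  rw [hsplit]
  have hx : poch (b - 2*(l:ℝ)) k * (Nat.factorial k : ℝ) ≠ 0 := mul_ne_zero hne hfe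
  rw [div_mul_eq_mul_div, div_mul_eq_mul_div, div_eq_iff hx]
  linear_combination (poch (b-1) k * Pp (2*l - k) b * poch (b - 2*(l:ℝ)) k) * hchoose

lemma sum_split (l : ℕ) (hl : 1 ≤ l) (b : ℝ) :
    ∑ k ∈ Finset.range (2*l+1), ((2*l).choose k : ℝ) * poch (b-1) k * Pp (2*l - k) b
    = (b-1) * (Rr (2*l) b + Ss (2*l) b + (b-1) * Mm (2*l) b) := by
  set n := 2*l with hn
  have hn2 : 2 ≤ n := by omega
  rw [Finset.sum_range_succ, Finset.range_eq_Ico,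
    Finset.sum_eq_sum_Ico_succ_bot (by omega : 0 < n)]
  have h0 : ((n.choose 0 : ℕ) : ℝ) * poch (b-1) 0 * Pp (n - 0) b = (b-1) * Rr n b := by
    simp [poch, Pp_factor n (by omega), Rr]
  have hlast : ((n.choose n : ℕ) : ℝ) * poch (b-1) n * Pp (n - n) b = (b-1) * Ss n b := by
    simp [Pp, poch_factor n (by omega), Ss]
  have hmid : ∑ k ∈ Finset.Ico (0+1) n, ((n.choose k : ℕ) : ℝ) * poch (b-1) k * Pp (n - k) b
      = (b-1)^2 * Mm n b := by
    rw [Mm, Finset.mul_sum]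
    refine Finset.sum_congr rfl fun k hk => ?_
    simp only [Finset.mem_Ico] at hk
    rw [poch_factor k (by omega), Pp_factor (n-k) (by omega)]
    have : n - k - 1 = n - k - 1 := rfl
    ring
  rw [h0, hlast, hmid]
  ring

noncomputable def Hsum (m : ℕ) : ℝ := ∑ i ∈ Finset.range m, (1:ℝ)/(i+1)

lemma prod_neg_one_sub (m : ℕ) :
    ∏ i ∈ Finset.range m, (-1 - (i:ℝ)) = (-1)^m * (Nat.factorial m : ℝ) := by
  induction m with
  | zero => simp
  | succ m ih =>
    rw [Finset.prod_range_succ, ih, Nat.factorial_succ]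
    push_cast; ring

lemma Rr_deriv (l : ℕ) (hl : 1 ≤ l) :
    HasDerivAt (Rr (2*l)) ((Nat.factorial (2*l-1) : ℝ) * Hsum (2*l-1)) 1 := by
  set n := 2*l with hn
  have h := HasDerivAt.finset_prod (u := Finset.range (n-1))
    (f := fun i b => b - 2 - (i:ℝ)) (f' := fun _ => (1:ℝ)) (x := (1:ℝ))
    (fun i _ => ((hasDerivAt_id (1:ℝ)).sub_const 2).sub_const (i:ℝ))
  have hval : ∑ i ∈ Finset.range (n-1), (∏ j ∈ (Finset.range (n-1)).erase i,
      ((1:ℝ) - 2 - (j:ℝ))) • (1:ℝ) = (Nat.factorial (n-1) : ℝ) * Hsum (n-1) := by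
    have hc : ∏ j ∈ Finset.range (n-1), ((1:ℝ) - 2 - (j:ℝ)) =
        (-1)^(n-1) * (Nat.factorial (n-1) : ℝ) := by
      rw [← prod_neg_one_sub]
      exact Finset.prod_congr rfl fun j _ => by ring
    rw [Hsum, Finset.mul_sum]
    refine Finset.sum_congr rfl fun i hi => ?_
    have hi0 : (0:ℝ) ≤ i := Nat.cast_nonneg i
    have hfi : (1:ℝ) - 2 - (i:ℝ) ≠ 0 := by intro h; nlinarith
    have he : (∏ j ∈ (Finset.range (n-1)).erase i, ((1:ℝ) - 2 - (j:ℝ)))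
        = ((-1)^(n-1) * (Nat.factorial (n-1) : ℝ)) / ((1:ℝ) - 2 - (i:ℝ)) := by
      rw [eq_div_iff hfi, ← hc, Finset.prod_erase_mul _ _ hi]
    have hodd : (-1:ℝ)^(n-1) = -1 := Odd.neg_one_pow ⟨l-1, by omega⟩
    rw [smul_eq_mul, mul_one, he, hodd, div_eq_iff hfi]
    have h1i : (1:ℝ) + i ≠ 0 := by positivity
    field_simp
    ring
  rw [← hval]
  have e : Rr n = ∏ i ∈ Finset.range (n-1), fun b : ℝ => b - 2 - (i:ℝ) := by
    ext b; simp [Rr, Finset.prod_apply]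
  rw [e]; exact h

lemma Ss_deriv (n : ℕ) :
    HasDerivAt (Ss n) ((Nat.factorial (n-1) : ℝ) * Hsum (n-1)) 1 := by
  have h := HasDerivAt.finset_prod (u := Finset.range (n-1))
    (f := fun i b => b + (i:ℝ)) (f' := fun _ => (1:ℝ)) (x := (1:ℝ))
    (fun i _ => (hasDerivAt_id (1:ℝ)).add_const (i:ℝ))
  have hc : ∏ j ∈ Finset.range (n-1), ((1:ℝ) + (j:ℝ)) = (Nat.factorial (n-1) : ℝ) := by
    rw [← Finset.prod_range_add_one_eq_factorial (n-1), Nat.cast_prod]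
    exact Finset.prod_congr rfl fun j _ => by push_cast; ring
  have hval : ∑ i ∈ Finset.range (n-1), (∏ j ∈ (Finset.range (n-1)).erase i,
      ((1:ℝ) + (j:ℝ))) • (1:ℝ) = (Nat.factorial (n-1) : ℝ) * Hsum (n-1) := by
    rw [Hsum, Finset.mul_sum]
    refine Finset.sum_congr rfl fun i hi => ?_
    have hfi : (1:ℝ) + (i:ℝ) ≠ 0 := by positivity
    have he : (∏ j ∈ (Finset.range (n-1)).erase i, ((1:ℝ) + (j:ℝ)))
        = (Nat.factorial (n-1) : ℝ) / ((1:ℝ) + (i:ℝ)) := by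
      rw [eq_div_iff hfi, ← hc, Finset.prod_erase_mul _ _ hi]
    rw [smul_eq_mul, mul_one, he]
    rw [mul_one_div, div_eq_div_iff hfi (by positivity : (i:ℝ) + 1 ≠ 0)]
    ring
  rw [← hval]
  have e : Ss n = ∏ i ∈ Finset.range (n-1), fun b : ℝ => b + (i:ℝ) := by
    ext b; simp [Ss, poch, Finset.prod_apply]
  rw [e]; exact h

lemma Mm_cont (n : ℕ) : Continuous (Mm n) := by
  refine continuous_finset_sum _ fun k _ => ?_
  refine Continuous.mul (Continuous.mul continuous_const ?_) ?_
  · unfold poch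
    exact continuous_finset_prod _ fun j _ => by continuity
  · exact continuous_finset_prod _ fun j _ => by continuity

lemma Mm_one (l : ℕ) (hl : 1 ≤ l) :
    Mm (2*l) 1 = ∑ k ∈ Finset.Ico 1 (2*l),
      (-1:ℝ)^(k-1) * (Nat.factorial (2*l)) / (k * (2*l - k)) := by
  rw [Mm]
  refine Finset.sum_congr rfl fun k hk => ?_
  simp only [Finset.mem_Ico] at hk
  have h1 : ∏ i ∈ Finset.range (2*l - k - 1), ((1:ℝ) - 2 - (i:ℝ))
      = (-1)^(2*l-k-1) * (Nat.factorial (2*l-k-1) : ℝ) := by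
    rw [← prod_neg_one_sub]
    exact Finset.prod_congr rfl fun j _ => by ring
  rw [poch_one, h1]
  have hsign : (-1:ℝ)^(2*l-k-1) = (-1:ℝ)^(k-1) := by
    rcases Nat.even_or_odd k with ⟨m, rfl⟩ | ⟨m, rfl⟩
    · rw [(by omega : 2*l-(m+m)-1 = 2*(l-m-1) + 1), (by omega : (m+m) - 1 = 2*(m-1) + 1)]
      simp [pow_succ, pow_mul]
    · rw [(by omega : 2*l-(2*m+1)-1 = 2*(l-m-1)), (by omega : (2*m+1) - 1 = 2*m)]
      simp [pow_mul]
  rw [hsign]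
  have hfact : ((2*l).choose k : ℝ) * (Nat.factorial (k-1)) * (Nat.factorial (2*l-k-1))
      * (k * (2*l - k)) = (Nat.factorial (2*l) : ℝ) := by
    have h2 : k * Nat.factorial (k-1) = Nat.factorial k := by
      rw [(by omega : k = (k-1)+1)] at *
      simp [Nat.factorial_succ]
    have h3 : (2*l - k) * Nat.factorial (2*l-k-1) = Nat.factorial (2*l-k) := by
      rw [(by omega : 2*l - k = (2*l-k-1)+1)] at *
      simp [Nat.factorial_succ]
    have h4 := Nat.choose_mul_factorial_mul_factorial (by omega : k ≤ 2*l)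
    have : (2*l).choose k * Nat.factorial (k-1) * Nat.factorial (2*l-k-1) * (k * (2*l-k))
        = Nat.factorial (2*l) := by
      calc (2*l).choose k * Nat.factorial (k-1) * Nat.factorial (2*l-k-1) * (k * (2*l-k))
          = (2*l).choose k * (k * Nat.factorial (k-1)) * ((2*l-k) * Nat.factorial (2*l-k-1)) := by ring
        _ = (2*l).choose k * Nat.factorial k * Nat.factorial (2*l-k) := by rw [h2, h3]
        _ = Nat.factorial (2*l) := h4
    calc ((2*l).choose k : ℝ) * (Nat.factorial (k-1)) * (Nat.factorial (2*l-k-1)) * (k * (2*l - k))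
        = (((2*l).choose k * Nat.factorial (k-1) * Nat.factorial (2*l-k-1) * (k * (2*l-k)) : ℕ) : ℝ) := by
          push_cast [(by omega : k ≤ 2*l)]; ring
      _ = _ := by rw [this]
  have hkk : ((k:ℝ) * ((2*l:ℝ) - k)) ≠ 0 := by
    have hk1 : (1:ℝ) ≤ k := by exact_mod_cast hk.1
    have hk2 : (k:ℝ) < 2*l := by exact_mod_cast hk.2
    intro h
    rcases mul_eq_zero.mp h with h | h <;> nlinarith
  rw [eq_div_iff hkk, ← hfact]
  push_cast [(by omega : k ≤ 2*l)]
  ring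

lemma one_add_cos_eq (b : ℝ) : 1 + Real.cos (π * b) = 2 * Real.sin (π * (b-1) / 2) ^ 2 := by
  have h1 : Real.sin (π * (b-1) / 2) = -Real.cos (π * b / 2) := by
    have : π * (b-1) / 2 = π * b / 2 - π / 2 := by ring
    rw [this, Real.sin_sub_pi_div_two]
  have h2 := Real.cos_sq (π * b / 2)
  rw [h1]
  have : 2 * (π * b / 2) = π * b := by ring
  rw [this] at h2
  nlinarith [h2]

lemma sin_half_ne_zero (b : ℝ) (hb0 : 0 < b) (hb1 : b < 1) :
    Real.sin (π * (b-1) / 2) ≠ 0 := by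
  have hpos : 0 < Real.sin (π * (1-b) / 2) := by
    apply Real.sin_pos_of_pos_of_lt_pi
    · have := Real.pi_pos; nlinarith
    · have := Real.pi_pos; nlinarith
  have : Real.sin (π * (b-1) / 2) = -Real.sin (π * (1-b) / 2) := by
    rw [← Real.sin_neg]; ring_nf
  rw [this]
  linarith

lemma trig_lim : Filter.Tendsto (fun b : ℝ => (b-1)^2/(1 + Real.cos (π*b)))
    (nhdsWithin (1:ℝ) {(1:ℝ)}ᶜ) (nhds (2/π^2)) := by
  have hsin : Filter.Tendsto (fun s : ℝ => Real.sin s / s) (nhdsWithin (0:ℝ) {(0:ℝ)}ᶜ) (nhds 1) := by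
    have h := Real.hasDerivAt_sin 0
    rw [hasDerivAt_iff_tendsto_slope] at h
    simp only [Real.cos_zero] at h
    refine h.congr fun s => ?_
    simp [slope_def_field]
  have hinv : Filter.Tendsto (fun s : ℝ => s / Real.sin s) (nhdsWithin (0:ℝ) {(0:ℝ)}ᶜ) (nhds 1) := by
    have := hsin.inv₀ one_ne_zero
    rw [inv_one] at this
    refine this.congr fun s => ?_
    rw [← one_div, one_div_div]
  have hmap : Filter.Tendsto (fun b : ℝ => π * (b-1) / 2)
      (nhdsWithin (1:ℝ) {(1:ℝ)}ᶜ) (nhdsWithin (0:ℝ) {(0:ℝ)}ᶜ) := by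
    rw [tendsto_nhdsWithin_iff]
    constructor
    · have hc : Continuous (fun b : ℝ => π * (b-1) / 2) := by continuity
      have := hc.tendsto 1
      simp only [sub_self, mul_zero, zero_div] at this
      exact this.mono_left nhdsWithin_le_nhds
    · filter_upwards [self_mem_nhdsWithin] with b hb
      simp only [Set.mem_compl_iff, Set.mem_singleton_iff] at hb ⊢
      intro h
      have hpi := Real.pi_ne_zero
      apply hb
      have : π * (b - 1) = 0 := by linarith [h]
      rcases mul_eq_zero.mp this with h' | h'
      · exact absurd h' hpi
      · linarith
  have hgg : Filter.Tendsto (fun b : ℝ => (b-1) / Real.sin (π * (b-1) / 2))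
      (nhdsWithin (1:ℝ) {(1:ℝ)}ᶜ) (nhds (2/π)) := by
    have hcomp := (hinv.comp hmap).const_mul (2/π)
    simp only [mul_one] at hcomp
    refine hcomp.congr fun b => ?_
    simp only [Function.comp_apply]
    rw [mul_div_assoc']
    congr 1
    have hpi := Real.pi_ne_zero
    field_simp
  have hfinal := (hgg.mul hgg).const_mul (1/2 : ℝ)
  have hval : (1/2 : ℝ) * (2/π * (2/π)) = 2/π^2 := by
    have hpi := Real.pi_ne_zero
    field_simp
  rw [hval] at hfinal
  refine hfinal.congr fun b => ?_
  rw [one_add_cos_eq b]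
  rcases eq_or_ne (Real.sin (π * (b-1)/2)) 0 with h | h
  · simp [h, div_mul_div_comm]
  · field_simp

lemma A_one (l : ℕ) (hl : 1 ≤ l) : Rr (2*l) 1 + Ss (2*l) 1 = 0 := by
  have h1 : Rr (2*l) 1 = (-1)^(2*l-1) * (Nat.factorial (2*l-1) : ℝ) := by
    rw [Rr, ← prod_neg_one_sub]
    exact Finset.prod_congr rfl fun j _ => by ring
  have h2 : Ss (2*l) 1 = (Nat.factorial (2*l-1) : ℝ) := by rw [Ss, poch_one]
  have hodd : (-1:ℝ)^(2*l-1) = -1 := Odd.neg_one_pow ⟨l-1, by omega⟩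
  rw [h1, h2, hodd]
  ring

lemma A_slope (l : ℕ) (hl : 1 ≤ l) :
    Filter.Tendsto (fun b => (Rr (2*l) b + Ss (2*l) b)/(b-1)) (nhdsWithin (1:ℝ) {(1:ℝ)}ᶜ)
      (nhds (2 * (Nat.factorial (2*l-1) : ℝ) * Hsum (2*l-1))) := by
  have hA : HasDerivAt (fun b => Rr (2*l) b + Ss (2*l) b)
      ((Nat.factorial (2*l-1) : ℝ) * Hsum (2*l-1) + (Nat.factorial (2*l-1) : ℝ) * Hsum (2*l-1)) 1 :=
    (Rr_deriv l hl).add (Ss_deriv (2*l))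
  rw [hasDerivAt_iff_tendsto_slope] at hA
  have : (Nat.factorial (2*l-1) : ℝ) * Hsum (2*l-1) + (Nat.factorial (2*l-1) : ℝ) * Hsum (2*l-1)
      = 2 * (Nat.factorial (2*l-1) : ℝ) * Hsum (2*l-1) := by ring
  rw [this] at hA
  refine hA.congr fun b => ?_
  rw [slope_def_field, A_one l hl]
  simp [div_eq_div_iff]

lemma neg_one_reflect (l k : ℕ) (h1 : 1 ≤ k) (h2 : k < 2*l) :
    (-1:ℝ)^(2*l-k-1) = (-1)^(k-1) := by
  rcases Nat.even_or_odd k with ⟨m, rfl⟩ | ⟨m, rfl⟩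
  · rw [(by omega : 2*l-(m+m)-1 = 2*(l-m-1) + 1), (by omega : (m+m) - 1 = 2*(m-1) + 1)]
    simp [pow_succ, pow_mul]
  · rw [(by omega : 2*l-(2*m+1)-1 = 2*(l-m-1)), (by omega : (2*m+1) - 1 = 2*m)]
    simp [pow_mul]

lemma stepA (l : ℕ) (hl : 1 ≤ l) :
    (l:ℝ) * ∑ k ∈ Finset.Ico 1 (2*l), (-1:ℝ)^(k-1)/(k*(2*(l:ℝ)-k))
      = ∑ k ∈ Finset.Ico 1 (2*l), (-1:ℝ)^(k-1)/k := by
  rw [Finset.mul_sum]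
  have hterm : ∀ k ∈ Finset.Ico 1 (2*l), (l:ℝ)*((-1:ℝ)^(k-1)/(k*(2*(l:ℝ)-k)))
      = (1/2)*((-1:ℝ)^(k-1)/k) + (1/2)*((-1:ℝ)^(k-1)/(2*(l:ℝ)-k)) := by
    intro k hk
    simp only [Finset.mem_Ico] at hk
    have hk1 : (1:ℝ) ≤ k := by exact_mod_cast hk.1
    have hk2 : (k:ℝ) < 2*l := by exact_mod_cast hk.2
    have h1 : (k:ℝ) ≠ 0 := by linarith
    have h2 : 2*(l:ℝ) - k ≠ 0 := by intro h; nlinarith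
    have hu := mul_inv_cancel₀ h1
    have hv := mul_inv_cancel₀ h2
    simp only [div_eq_mul_inv, mul_inv]
    linear_combination ((-1:ℝ)^(k-1)/2*(k:ℝ)⁻¹) * hv + ((-1:ℝ)^(k-1)/2*(2*(l:ℝ)-k)⁻¹) * hu
  rw [Finset.sum_congr rfl hterm, Finset.sum_add_distrib]
  have hrefl : ∑ k ∈ Finset.Ico 1 (2*l), (-1:ℝ)^(k-1)/(2*(l:ℝ)-k)
      = ∑ k ∈ Finset.Ico 1 (2*l), (-1:ℝ)^(k-1)/k := by
    refine Finset.sum_nbij' (fun k => 2*l - k) (fun k => 2*l - k) ?_ ?_ ?_ ?_ ?_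
    · intro k hk; simp only [Finset.mem_Ico] at hk ⊢; omega
    · intro k hk; simp only [Finset.mem_Ico] at hk ⊢; omega
    · intro k hk; simp only [Finset.mem_Ico] at hk; show 2*l - (2*l - k) = k; omega
    · intro k hk; simp only [Finset.mem_Ico] at hk; show 2*l - (2*l - k) = k; omega
    · intro k hk
      simp only [Finset.mem_Ico] at hk
      have hcast : ((2*l - k : ℕ):ℝ) = 2*(l:ℝ) - k := by
        have : k ≤ 2*l := by omega
        push_cast [this]; ring
      rw [hcast, (by omega : 2*l - k - 1 = 2*l - k - 1), neg_one_reflect l k hk.1 hk.2]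
  rw [← Finset.mul_sum, ← Finset.mul_sum, hrefl]
  ring

lemma stepB (l : ℕ) :
    ∑ k ∈ Finset.Ico 1 (2*l), ((1:ℝ)/k + (-1:ℝ)^(k-1)/k)
      = 2 * ∑ k ∈ Finset.Icc 1 l, 1/(2*(k:ℝ)-1) := by
  induction l with
  | zero => simp
  | succ l ih =>
    rcases Nat.eq_zero_or_pos l with rfl | hl
    · rw [show Finset.Ico 1 (2*1) = {1} from rfl, show Finset.Icc 1 1 = {1} from rfl]
      norm_num
    · rw [show 2*(l+1) = (2*l+1)+1 by ring,
        Finset.sum_Ico_succ_top (by omega : 1 ≤ 2*l+1),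
        Finset.sum_Ico_succ_top (by omega : 1 ≤ 2*l), ih,
        Finset.sum_Icc_succ_top (by omega : 1 ≤ l+1)]

      have hodd : (-1:ℝ)^(2*l-1) = -1 := Odd.neg_one_pow ⟨l-1, by omega⟩
      have heven : (-1:ℝ)^(2*l+1-1) = 1 := by
        rw [(by omega : 2*l+1-1 = 2*l)]; simp [pow_mul]
      rw [hodd, heven]
      have h2l : ((2*l : ℕ):ℝ) = 2*(l:ℝ) := by push_cast; ring
      have h2l1 : ((2*l+1 : ℕ):ℝ) = 2*(l:ℝ)+1 := by push_cast; ring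
      have hl1 : ((l+1 : ℕ):ℝ) = (l:ℝ)+1 := by push_cast; ring
      rw [h2l, h2l1, hl1]
      ring

lemma final_value (l : ℕ) (hl : 1 ≤ l) :
    ((2 * (Nat.factorial (2*l-1) : ℝ) * Hsum (2*l-1) + Mm (2*l) 1) / (Nat.factorial (2*l)))
        * (2/π^2)
      = 4/(π^2 * (l:ℝ)) * ∑ k ∈ Finset.Icc 1 l, 1/(2*(k:ℝ)-1) := by
  have hH : ∑ k ∈ Finset.Ico 1 (2*l), (1:ℝ)/k = Hsum (2*l-1) := by
    rw [Finset.sum_Ico_eq_sum_range, Hsum]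
    exact Finset.sum_congr rfl fun i _ => by push_cast; ring
  have hMT : Mm (2*l) 1 = (Nat.factorial (2*l) : ℝ) *
      ∑ k ∈ Finset.Ico 1 (2*l), (-1:ℝ)^(k-1)/(k*(2*(l:ℝ)-k)) := by
    rw [Mm_one l hl, Finset.mul_sum]
    exact Finset.sum_congr rfl fun k _ => by ring
  have key : Hsum (2*l-1) + (l:ℝ) * ∑ k ∈ Finset.Ico 1 (2*l), (-1:ℝ)^(k-1)/(k*(2*(l:ℝ)-k))
      = 2 * ∑ k ∈ Finset.Icc 1 l, 1/(2*(k:ℝ)-1) := by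
    rw [stepA l hl, ← hH, ← Finset.sum_add_distrib, stepB l]
  have hfact : (Nat.factorial (2*l) : ℝ) = (2*(l:ℝ)) * (Nat.factorial (2*l-1) : ℝ) := by
    rw [(by omega : 2*l = (2*l-1)+1), Nat.factorial_succ]
    push_cast [(by omega : 1 ≤ 2*l)]
    ring_nf
  set T := ∑ k ∈ Finset.Ico 1 (2*l), (-1:ℝ)^(k-1)/(k*(2*(l:ℝ)-k)) with hT
  set Sg := ∑ k ∈ Finset.Icc 1 l, 1/(2*(k:ℝ)-1) with hSg
  rw [hMT, hfact]
  have hF1 : (Nat.factorial (2*l-1) : ℝ) ≠ 0 := by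
    exact_mod_cast (Nat.factorial_pos (2*l-1)).ne'
  have hl0 : (l:ℝ) ≠ 0 := by
    have : (0:ℝ) < l := by exact_mod_cast hl
    linarith
  have hπ : π ≠ 0 := Real.pi_ne_zero
  field_simp
  linear_combination 2 * key

noncomputable def Qfun (l : ℕ) (b : ℝ) : ℝ :=
  ((Rr (2*l) b + Ss (2*l) b)/(b-1) + Mm (2*l) b) * ((b-1)^2/(1 + Real.cos (π*b)))
    / (Nat.factorial (2*l))

lemma Q_lim (l : ℕ) (hl : 1 ≤ l) :
    Filter.Tendsto (Qfun l) (nhdsWithin (1:ℝ) {(1:ℝ)}ᶜ)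
      (nhds (4/(π^2 * (l:ℝ)) * ∑ k ∈ Finset.Icc 1 l, 1/(2*(k:ℝ)-1))) := by
  have h2 : Filter.Tendsto (Mm (2*l)) (nhdsWithin (1:ℝ) {(1:ℝ)}ᶜ) (nhds (Mm (2*l) 1)) :=
    ((Mm_cont (2*l)).tendsto 1).mono_left nhdsWithin_le_nhds
  have h := (((A_slope l hl).add h2).mul trig_lim).div_const ((Nat.factorial (2*l) : ℝ))
  have hval : (2 * (Nat.factorial (2*l-1) : ℝ) * Hsum (2*l-1) + Mm (2*l) 1) * (2/π^2)
      / (Nat.factorial (2*l) : ℝ)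
      = 4/(π^2 * (l:ℝ)) * ∑ k ∈ Finset.Icc 1 l, 1/(2*(k:ℝ)-1) := by
    rw [← final_value l hl]; ring
  rw [← hval]
  exact h

/-- In the limit `p → -1⁺` (equivalently `b → 1`), the coefficients
`h_p(l) = (1/(1+p)) Γ(b)/(Γ(2l+1)Γ(b-2l)) ₂F₁(-2l, b-1; b-2l; -1)` (with `b = (1/π)arccos p`)
converge for each `l ≥ 1` to `h_{-1}(l) = (4/(π² l)) Σ_{k=1}^{l} 1/(2k-1)`. -/
theorem hdown_limit_at_neg_one (l : ℕ) (hl : 1 ≤ l) :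
    Tendsto
      (fun p : ℝ =>
        (1 / (1 + p)) *
          (Real.Gamma (Real.arccos p / π) /
            (Real.Gamma (2 * l + 1) * Real.Gamma (Real.arccos p / π - 2 * l))) *
          hyp2F1term (Real.arccos p / π) l)
      (nhdsWithin (-1 : ℝ) (Set.Ioi (-1 : ℝ)))
      (nhds ((4 / (π ^ 2 * l)) * ∑ k ∈ Finset.Icc 1 l, 1 / (2 * (k : ℝ) - 1))) := by
  have hmap : Filter.Tendsto (fun p : ℝ => Real.arccos p / π)
      (nhdsWithin (-1:ℝ) (Set.Ioi (-1:ℝ))) (nhdsWithin (1:ℝ) {(1:ℝ)}ᶜ) := by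
    rw [tendsto_nhdsWithin_iff]
    constructor
    · have hc : Continuous (fun p : ℝ => Real.arccos p / π) :=
        Real.continuous_arccos.div_const π
      have := hc.tendsto (-1)
      simp only [Real.arccos_neg_one, div_self Real.pi_ne_zero] at this
      exact this.mono_left nhdsWithin_le_nhds
    · filter_upwards [self_mem_nhdsWithin] with p hp
      simp only [Set.mem_Ioi] at hp
      simp only [Set.mem_compl_iff, Set.mem_singleton_iff]
      intro h
      have harc : Real.arccos p = π := by
        rwa [div_eq_one_iff_eq Real.pi_ne_zero] at h
      rcases le_or_gt p 1 with hp1 | hp1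
      · have := Real.cos_arccos hp.le hp1
        rw [harc, Real.cos_pi] at this
        linarith
      · have h0 : Real.arccos p = 0 := Real.arccos_eq_zero.mpr hp1.le
        rw [h0] at harc
        exact Real.pi_ne_zero harc.symm
  have hcomp := (Q_lim l hl).comp hmap
  refine Filter.Tendsto.congr' ?_ hcomp
  have hIoo : Set.Ioo (-1:ℝ) 1 ∈ nhdsWithin (-1:ℝ) (Set.Ioi (-1:ℝ)) :=
    Ioo_mem_nhdsGT_of_mem ⟨le_refl _, by norm_num⟩
  filter_upwards [hIoo] with p hp
  have hp1 : -1 < p := hp.1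
  have hp2 : p < 1 := hp.2
  set b := Real.arccos p / π with hbdef
  have hb0 : 0 < b := div_pos (Real.arccos_pos.mpr hp2) Real.pi_pos
  have hb1 : b < 1 := by
    have harc : Real.arccos p < π := by
      refine lt_of_le_of_ne (Real.arccos_le_pi p) fun h => ?_
      have := Real.cos_arccos hp1.le hp2.le
      rw [h, Real.cos_pi] at this
      linarith
    exact (div_lt_one Real.pi_pos).mpr harc
  have hπb : π * b = Real.arccos p := by
    rw [hbdef, mul_div_cancel₀ _ Real.pi_ne_zero]
  have hpcos : 1 + p = 1 + Real.cos (π * b) := by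
    rw [hπb, Real.cos_arccos hp1.le hp2.le]
  have hcosne : 1 + Real.cos (π * b) ≠ 0 := by
    rw [one_add_cos_eq b]
    have := sin_half_ne_zero b hb0 hb1
    positivity
  have hkey : Real.Gamma b / (Real.Gamma (2 * (l:ℝ) + 1) * Real.Gamma (b - 2 * l))
      * hyp2F1term b l
      = (b-1) * (Rr (2*l) b + Ss (2*l) b + (b-1) * Mm (2*l) b) / (Nat.factorial (2*l)) := by
    rw [gamma_ratio l b hb0 hb1, div_mul_eq_mul_div, mul_comm, hyp_mul l b hb1,
      sum_split l hl b]
  simp only [Function.comp_apply]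
  symm
  show (1 / (1 + p)) * (Real.Gamma b / (Real.Gamma (2 * (l:ℝ) + 1) * Real.Gamma (b - 2 * l)))
      * hyp2F1term b l = Qfun l b
  rw [mul_assoc, hkey, hpcos, Qfun]
  have hbne : b - 1 ≠ 0 := by intro h; linarith
  have hfne : (Nat.factorial (2*l) : ℝ) ≠ 0 := by
    exact_mod_cast (Nat.factorial_pos (2*l)).ne'
  field_simp
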